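/- The function (t,x) ↦ inf over ξ ∈ K of [ V(t, x+ξ) + ℓ(t,ξ) ] is continuous on [0,T]×ℝⁿ. -/

import Mathlib

open Set

/-- Tietze extension for real-valued functions continuous on a closed set. -/
lemma exists_ext {X : Type*} [TopologicalSpace X] [NormalSpace X] {s : Set X}
    (hs : IsClosed s) {f : X → ℝ} (hf : ContinuousOn f s) :
    ∃ g : X → ℝ, Continuous g ∧ ∀ x ∈ s, g x = f x := by
  obtain ⟨g, hg⟩ := ContinuousMap.exists_restrict_eq hs ⟨s.restrict f, hf.restrict⟩
  refine ⟨g, g.continuous, fun x hx => ?_⟩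
  have := congrFun (congrArg DFunLike.coe hg) ⟨x, hx⟩
  exact this

/-- (Paper's Corollary 2.1.) The intervention operator
`(t,x) ↦ inf_{ξ∈K} [V(t,x+ξ) + ℓ(t,ξ)]` is continuous on `[0,T] × ℝⁿ`. -/
theorem stmt_2 (n : ℕ) (hn : 1 ≤ n) (T M ℓ₀ α : ℝ)
    (hT : 0 < T) (hM : 0 < M) (hℓ₀ : 0 < ℓ₀) (hα : 0 < α)
    (K : Set (EuclideanSpace ℝ (Fin n)))
    (hKne : K.Nonempty) (hKcl : IsClosed K) (hKconv : Convex ℝ K)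
    (hKcone : ∀ c : ℝ, 0 ≤ c → ∀ x ∈ K, c • x ∈ K)
    (V : ℝ → EuclideanSpace ℝ (Fin n) → ℝ)
    (hVcont : ContinuousOn (fun p : ℝ × EuclideanSpace ℝ (Fin n) => V p.1 p.2)
      (Icc (0:ℝ) T ×ˢ (univ : Set (EuclideanSpace ℝ (Fin n)))))
    (hVbd : ∀ t ∈ Icc (0:ℝ) T, ∀ x, |V t x| ≤ M)
    (ℓ : ℝ → EuclideanSpace ℝ (Fin n) → ℝ)
    (hℓcont : ContinuousOn (fun p : ℝ × EuclideanSpace ℝ (Fin n) => ℓ p.1 p.2)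
      (Icc (0:ℝ) T ×ˢ K))
    (hℓcoer : ∀ t ∈ Icc (0:ℝ) T, ∀ ξ ∈ K, ℓ₀ + α * ‖ξ‖ ≤ ℓ t ξ) :
    ContinuousOn
      (fun p : ℝ × EuclideanSpace ℝ (Fin n) =>
        sInf ((fun ξ => V p.1 (p.2 + ξ) + ℓ p.1 ξ) '' K))
      (Icc (0:ℝ) T ×ˢ (univ : Set (EuclideanSpace ℝ (Fin n)))) := by
  classical
  obtain ⟨ξ₀, hξ₀K⟩ := hKne
  have h0T : (0:ℝ) ∈ Icc (0:ℝ) T := ⟨le_refl 0, hT.le⟩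
  -- extensions
  have hDcl : IsClosed (Icc (0:ℝ) T ×ˢ (univ : Set (EuclideanSpace ℝ (Fin n)))) := isClosed_Icc.prod isClosed_univ
  have hScl : IsClosed (Icc (0:ℝ) T ×ˢ K) := isClosed_Icc.prod hKcl
  obtain ⟨V', hV'c, hV'eq⟩ := exists_ext hDcl hVcont
  obtain ⟨L', hL'c, hL'eq⟩ := exists_ext hScl hℓcont
  have hV'eq' : ∀ t ∈ Icc (0:ℝ) T, ∀ x : EuclideanSpace ℝ (Fin n), V' (t, x) = V t x := fun t ht x =>
    hV'eq (t, x) ⟨ht, mem_univ x⟩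
  have hL'eq' : ∀ t ∈ Icc (0:ℝ) T, ∀ ξ ∈ K, L' (t, ξ) = ℓ t ξ := fun t ht ξ hξ =>
    hL'eq (t, ξ) ⟨ht, hξ⟩
  -- a bound B for ℓ t ξ₀
  obtain ⟨t₀, ht₀, hmax⟩ := (isCompact_Icc (a := (0:ℝ)) (b := T)).exists_isMaxOn
    ⟨0, h0T⟩ (f := fun t : ℝ => L' (t, ξ₀)) (by fun_prop)
  set B := L' (t₀, ξ₀) with hBdef
  have hB : ∀ t ∈ Icc (0:ℝ) T, ℓ t ξ₀ ≤ B := fun t ht => by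
    have h1 : L' (t, ξ₀) ≤ L' (t₀, ξ₀) := hmax ht
    rw [hL'eq' t ht ξ₀ hξ₀K] at h1
    exact h1
  have hℓ₀B : ℓ₀ ≤ B := le_trans (by
    have := hℓcoer 0 h0T ξ₀ hξ₀K
    nlinarith [norm_nonneg ξ₀]) (hB 0 h0T)
  set R := (2 * M + B - ℓ₀) / α with hRdef
  have hαR : α * R = 2 * M + B - ℓ₀ := by rw [hRdef]; field_simp [hα.ne']
  have hξ₀R : ‖ξ₀‖ ≤ R := by
    have h1 := hℓcoer 0 h0T ξ₀ hξ₀K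
    have h2 := hB 0 h0T
    rw [le_div_iff₀ hα]; nlinarith
  set C : Set (EuclideanSpace ℝ (Fin n)) := K ∩ Metric.closedBall 0 R with hCdef
  have hCc : IsCompact C := (isCompact_closedBall (0:EuclideanSpace ℝ (Fin n)) R).inter_left hKcl
  have hξ₀C : ξ₀ ∈ C := ⟨hξ₀K, by simpa [Metric.mem_closedBall, dist_zero_right] using hξ₀R⟩
  have hCK : C ⊆ K := inter_subset_left
  -- the globally continuous inf
  set F : (ℝ × EuclideanSpace ℝ (Fin n)) → EuclideanSpace ℝ (Fin n) → ℝ := fun p ξ => V' (p.1, p.2 + ξ) + L' (p.1, ξ) with hFdef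
  have hFcont : Continuous ↿F := by
    apply Continuous.add
    · exact hV'c.comp (by fun_prop)
    · exact hL'c.comp (by fun_prop)
  have hg : Continuous fun p : ℝ × EuclideanSpace ℝ (Fin n) => sInf (F p '' C) :=
    hCc.continuous_sInf hFcont
  refine (hg.continuousOn).congr ?_
  rintro ⟨t, x⟩ ⟨ht, -⟩
  -- on the domain, F agrees with the original integrand on K
  set h : EuclideanSpace ℝ (Fin n) → ℝ := fun ξ => V t (x + ξ) + ℓ t ξ with hhdef
  have hFh : ∀ ξ ∈ K, F (t, x) ξ = h ξ := fun ξ hξ => by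
    simp only [hFdef, hhdef]
    rw [hV'eq' t ht (x + ξ), hL'eq' t ht ξ hξ]
  have himg : F (t, x) '' C = h '' C := by
    apply image_congr
    intro ξ hξ; exact hFh ξ (hCK hξ)
  -- lower bounds
  have hlb : ∀ ξ ∈ K, ℓ₀ - M + α * ‖ξ‖ ≤ h ξ := fun ξ hξ => by
    have h1 := hℓcoer t ht ξ hξ
    have h2 := hVbd t ht (x + ξ)
    have h3 : -M ≤ V t (x + ξ) := neg_le_of_abs_le h2
    simp only [hhdef]; nlinarith
  have hbddK : BddBelow (h '' K) := by
    refine ⟨ℓ₀ - M, ?_⟩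
    rintro b ⟨ξ, hξ, rfl⟩
    have := hlb ξ hξ
    nlinarith [norm_nonneg ξ, mul_nonneg hα.le (norm_nonneg ξ)]
  have hneC : (h '' C).Nonempty := ⟨h ξ₀, mem_image_of_mem h hξ₀C⟩
  have hneK : (h '' K).Nonempty := ⟨h ξ₀, mem_image_of_mem h hξ₀K⟩
  -- sInf over K equals sInf over C
  have hupper : h ξ₀ ≤ M + B := by
    have h1 := hB t ht
    have h2 := hVbd t ht (x + ξ₀)
    have h3 : V t (x + ξ₀) ≤ M := le_of_abs_le h2
    simp only [hhdef]; linarith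
  have hkey : sInf (h '' K) = sInf (h '' C) := by
    apply le_antisymm
    · exact csInf_le_csInf hbddK hneC (image_mono (f := h) hCK)
    · apply le_csInf hneK
      rintro b ⟨ξ, hξ, rfl⟩
      by_cases hR : ‖ξ‖ ≤ R
      · exact csInf_le (hbddK.mono (image_mono (f := h) hCK))
          (mem_image_of_mem h ⟨hξ, by simpa [Metric.mem_closedBall, dist_zero_right] using hR⟩)
      · push_neg at hR
        have h1 := hlb ξ hξ
        have h2 : M + B ≤ h ξ := by nlinarith
        calc sInf (h '' C) ≤ h ξ₀ := csInf_le (hbddK.mono (image_mono (f := h) hCK))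
              (mem_image_of_mem h hξ₀C)
          _ ≤ M + B := hupper
          _ ≤ h ξ := h2
  simp only [himg]
  exact hkey.symm ▸ rfl
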